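/- Let G be a k-regular graph on n vertices with n even, k odd, and k ≥ 2 (hence k ≥ 3). If G admits a 2-coloring under which strictly more than half of the vertices are under strict majority illusion, then n ≥ 2(3k+1)/(k−1). -/
import Mathlib


open Finset

variable {V : Type*} [Fintype V] [DecidableEq V]

/-- The strict majority color of a finite set of agents (`true` = red, `false` = blue),
or `none` in case of a tie. -/
def maj (c : V → Bool) (s : Finset V) : Option Bool :=
  if 2 * (s.filter fun v => c v = true).card > s.card then some true
  else if 2 * (s.filter fun v => c v = false).card > s.card then some false
  else none

/-- Vertex `i` is under weak-majority illusion: the majority winner (possibly a tie)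
of its neighborhood differs from the global one. -/
def weakIll (G : SimpleGraph V) [DecidableRel G.Adj] (c : V → Bool) (i : V) : Prop :=
  maj c (G.neighborFinset i) ≠ maj c Finset.univ

/-- Vertex `i` is under strict majority illusion: neither its neighborhood nor the whole
graph is tied, and their majority winners differ. -/
def strictIll (G : SimpleGraph V) [DecidableRel G.Adj] (c : V → Bool) (i : V) : Prop :=
  maj c (G.neighborFinset i) ≠ none ∧ maj c Finset.univ ≠ none ∧
    maj c (G.neighborFinset i) ≠ maj c Finset.univ

instance (G : SimpleGraph V) [DecidableRel G.Adj] (c : V → Bool) :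
    DecidablePred (weakIll G c) := fun _ => by unfold weakIll; infer_instance

instance (G : SimpleGraph V) [DecidableRel G.Adj] (c : V → Bool) :
    DecidablePred (strictIll G c) := fun _ => by unfold strictIll; infer_instance

set_option linter.unusedSectionVars false in
private lemma maj_spec {c : V → Bool} {s : Finset V} {b : Bool} (h : maj c s = some b) :
    s.card < 2 * (s.filter fun v => c v = b).card := by
  unfold maj at h
  split_ifs at h with h1 h2
  · simp only [Option.some.injEq] at h; subst h; exact h1
  · simp only [Option.some.injEq] at h; subst h; exact h2

theorem regular_even_odd_majority_majority_bound (G : SimpleGraph V) [DecidableRel G.Adj]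
    (k : ℕ) (hreg : ∀ v : V, G.degree v = k)
    (hn : Even (Fintype.card V)) (hk : Odd k) (hk2 : 2 ≤ k)
    (h : ∃ c : V → Bool,
      2 * (Finset.univ.filter fun i => strictIll G c i).card > Fintype.card V) :
    (Fintype.card V : ℚ) ≥ 2 * (3 * k + 1) / (k - 1) := by
  obtain ⟨c, hc⟩ := h
  obtain ⟨m, hm⟩ := hn
  set n := Fintype.card V with hn'
  set I := Finset.univ.filter fun i => strictIll G c i with hIdef
  have hIle : I.card ≤ n := by
    simpa [hn', Finset.card_univ] using Finset.card_filter_le Finset.univ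
      (fun i => strictIll G c i)
  have hIpos : 0 < I.card := by omega
  obtain ⟨i0, hi0⟩ := Finset.card_pos.mp hIpos
  have hstrict0 : strictIll G c i0 := (Finset.mem_filter.mp hi0).2
  obtain ⟨b, hb⟩ := Option.ne_none_iff_exists'.mp hstrict0.2.1
  have hglob := maj_spec hb
  set B := Finset.univ.filter fun v => c v = !b with hBdef
  set R := Finset.univ.filter fun v => c v = b with hRdef
  have hpart : R.card + B.card = n := by
    have h0 := Finset.card_filter_add_card_filter_not
      (s := (Finset.univ : Finset V)) (p := fun v => c v = b)
    have heq : (Finset.univ.filter fun v => ¬ c v = b) = B := by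
      apply Finset.filter_congr
      intro v _
      cases hcv : c v <;> cases b <;> simp
    rw [heq] at h0
    simpa [hn', Finset.card_univ] using h0
  have hRn : n < 2 * R.card := by simpa [hn', Finset.card_univ] using hglob
  -- each illusioned vertex has at least (k+1)/2 neighbors in B
  have key : ∀ i ∈ I, k + 1 ≤ 2 * (B.filter fun v => G.Adj i v).card := by
    intro i hi
    have hs := (Finset.mem_filter.mp hi).2
    obtain ⟨b', hb'⟩ := Option.ne_none_iff_exists'.mp hs.1
    have hb'' : b' = !b := by
      have h3 := hs.2.2
      rw [hb, hb'] at h3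
      cases b <;> cases b' <;> simp_all
    subst hb''
    have h2 := maj_spec hb'
    have hcard : (G.neighborFinset i).card = k := by
      rw [G.card_neighborFinset_eq_degree]; exact hreg i
    have hset : ((G.neighborFinset i).filter fun v => c v = !b)
        = B.filter fun v => G.Adj i v := by
      ext v
      simp only [Finset.mem_filter, SimpleGraph.mem_neighborFinset, hBdef,
        Finset.mem_univ, true_and]
      tauto
    rw [hcard, hset] at h2
    obtain ⟨t, ht⟩ := hk
    omega
  -- sum lower bound
  have hsum1 : I.card * (k + 1) ≤ ∑ i ∈ I, 2 * (B.filter fun v => G.Adj i v).card := by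
    calc I.card * (k + 1) = ∑ _i ∈ I, (k + 1) := by rw [Finset.sum_const, smul_eq_mul]
    _ ≤ _ := Finset.sum_le_sum key
  -- swap the double count
  have hswap : (∑ i ∈ I, (B.filter fun v => G.Adj i v).card)
      = ∑ v ∈ B, (I.filter fun i => G.Adj i v).card := by
    simp_rw [Finset.card_filter]
    exact Finset.sum_comm
  have hbound : ∀ v ∈ B, (I.filter fun i => G.Adj i v).card ≤ k := by
    intro v _
    have hsub : (I.filter fun i => G.Adj i v) ⊆ G.neighborFinset v := by
      intro i hi
      rw [SimpleGraph.mem_neighborFinset]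
      exact ((Finset.mem_filter.mp hi).2).symm
    calc (I.filter fun i => G.Adj i v).card ≤ (G.neighborFinset v).card :=
          Finset.card_le_card hsub
      _ = k := by rw [G.card_neighborFinset_eq_degree]; exact hreg v
  have hsum2 : (∑ v ∈ B, (I.filter fun i => G.Adj i v).card) ≤ B.card * k := by
    calc (∑ v ∈ B, (I.filter fun i => G.Adj i v).card) ≤ ∑ _v ∈ B, k :=
          Finset.sum_le_sum hbound
      _ = B.card * k := by rw [Finset.sum_const, smul_eq_mul]
  have main : I.card * (k + 1) ≤ 2 * (B.card * k) := by
    calc I.card * (k + 1) ≤ ∑ i ∈ I, 2 * (B.filter fun v => G.Adj i v).card := hsum1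
      _ = 2 * ∑ i ∈ I, (B.filter fun v => G.Adj i v).card := by rw [Finset.mul_sum]
      _ = 2 * ∑ v ∈ B, (I.filter fun i => G.Adj i v).card := by rw [hswap]
      _ ≤ 2 * (B.card * k) := by omega
  have hIm : m + 1 ≤ I.card := by omega
  have hBm : B.card + 1 ≤ m := by omega
  have hk3 : 3 ≤ k := by obtain ⟨t, ht⟩ := hk; omega
  have main2 : (m + 1) * (k + 1) ≤ 2 * (B.card * k) :=
    le_trans (Nat.mul_le_mul_right _ hIm) main
  have hkQ : (0:ℚ) < (k:ℚ) - 1 := by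
    have : (3:ℚ) ≤ (k:ℚ) := by exact_mod_cast hk3
    linarith
  rw [ge_iff_le, div_le_iff₀ hkQ]
  have h1 : ((m:ℚ) + 1) * ((k:ℚ) + 1) ≤ 2 * ((B.card : ℚ) * k) := by exact_mod_cast main2
  have h2 : (B.card : ℚ) + 1 ≤ (m : ℚ) := by exact_mod_cast hBm
  have h3 : (3:ℚ) ≤ (k:ℚ) := by exact_mod_cast hk3
  have hcV : (n : ℚ) = 2 * m := by rw [hm]; push_cast; ring
  rw [hcV]
  nlinarith [mul_le_mul_of_nonneg_right h2 (by linarith : (0:ℚ) ≤ (k:ℚ))]
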